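/- Let G be a finite simple graph without isolated vertices in which every vertex has degree at least 2. Then there exists an orientation of G such that the number of 1-light vertices equals 2m − μ(G'), where G' is the gadget graph of the construction and μ denotes maximum matching size; in particular, for any maximum matching M of G' and the derived orientation Λ(M), the number of 1-light vertices of Λ(M) is at most 2m − |M|. -/

import Mathlib

/-- An orientation of a simple graph `G`: a relation `D` picking, for each edge,
exactly one of the two directions. -/
def IsOrientation {V : Type*} (G : SimpleGraph V) (D : V → V → Prop) : Prop :=
  (∀ u v, D u v → G.Adj u v) ∧ ∀ u v, G.Adj u v → (D u v ↔ ¬ D v u)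

/-- The out-degree of a vertex under an orientation. -/
noncomputable def outDeg {V : Type*} (D : V → V → Prop) (u : V) : ℕ :=
  {v | D u v}.ncard

/-- The gadget graph G' of the construction.  Vertices: `Sum.inl (e, some u)` is
the subdivision vertex u'_e, `Sum.inl (e, none)` is the connecting vertex x_e,
and `Sum.inr (v, i)` (for `i < d(v) - 2`) is the gadget vertex v''_i.  Edges:
the connecting edges u'_e -- x_e; all edges v''_i -- v'_e for e ∋ v; and, for
each vertex v, one special edge between the two subdivision vertices v'_e, v'_f
for the chosen pair of incident edges `sp v = (e, f)`. -/
def Gprime {V : Type*} (G : SimpleGraph V) (sp : V → Sym2 V × Sym2 V) :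
    SimpleGraph ((Sym2 V × Option V) ⊕ (V × ℕ)) :=
  SimpleGraph.fromRel (fun x y =>
    (∃ u e, x = Sum.inl (e, some u) ∧ y = Sum.inl (e, none) ∧
      e ∈ G.edgeSet ∧ u ∈ e) ∨
    (∃ v i e, x = Sum.inr (v, i) ∧ y = Sum.inl (e, some v) ∧
      e ∈ G.edgeSet ∧ v ∈ e ∧ i + 2 < {w | G.Adj v w}.ncard) ∨
    (∃ v : V, x = Sum.inl ((sp v).1, some v) ∧ y = Sum.inl ((sp v).2, some v)))

namespace Aux
open Set SimpleGraph

variable {V : Type*}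

/-- cases for adjacency in Gprime -/
lemma adj_cases {G : SimpleGraph V} {sp : V → Sym2 V × Sym2 V}
    {x y : (Sym2 V × Option V) ⊕ (V × ℕ)} (h : (Gprime G sp).Adj x y) :
    (∃ e u, e ∈ G.edgeSet ∧ u ∈ e ∧
      ((x = Sum.inl (e, some u) ∧ y = Sum.inl (e, none)) ∨
        (y = Sum.inl (e, some u) ∧ x = Sum.inl (e, none)))) ∨
    (∃ v i e, e ∈ G.edgeSet ∧ v ∈ e ∧ i + 2 < {w | G.Adj v w}.ncard ∧
      ((x = Sum.inr (v, i) ∧ y = Sum.inl (e, some v)) ∨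
        (y = Sum.inr (v, i) ∧ x = Sum.inl (e, some v)))) ∨
    (∃ v, (x = Sum.inl ((sp v).1, some v) ∧ y = Sum.inl ((sp v).2, some v)) ∨
      (y = Sum.inl ((sp v).1, some v) ∧ x = Sum.inl ((sp v).2, some v))) := by
  rw [Gprime, SimpleGraph.fromRel_adj] at h
  obtain ⟨-, h | h⟩ := h
  · rcases h with (⟨u, e, h1, h2, h3, h4⟩ | ⟨v, i, e, h1, h2, h3, h4, h5⟩ | ⟨v, h1, h2⟩)
    · exact Or.inl ⟨e, u, h3, h4, Or.inl ⟨h1, h2⟩⟩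
    · exact Or.inr (Or.inl ⟨v, i, e, h3, h4, h5, Or.inl ⟨h1, h2⟩⟩)
    · exact Or.inr (Or.inr ⟨v, Or.inl ⟨h1, h2⟩⟩)
  · rcases h with (⟨u, e, h1, h2, h3, h4⟩ | ⟨v, i, e, h1, h2, h3, h4, h5⟩ | ⟨v, h1, h2⟩)
    · exact Or.inl ⟨e, u, h3, h4, Or.inr ⟨h1, h2⟩⟩
    · exact Or.inr (Or.inl ⟨v, i, e, h3, h4, h5, Or.inr ⟨h1, h2⟩⟩)
    · exact Or.inr (Or.inr ⟨v, Or.inr ⟨h1, h2⟩⟩)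

lemma adj_conn {G : SimpleGraph V} {sp : V → Sym2 V × Sym2 V} {e : Sym2 V} {u : V}
    (he : e ∈ G.edgeSet) (hu : u ∈ e) :
    (Gprime G sp).Adj (Sum.inl (e, some u)) (Sum.inl (e, none)) := by
  rw [Gprime, SimpleGraph.fromRel_adj]
  exact ⟨by simp, Or.inl (Or.inl ⟨u, e, rfl, rfl, he, hu⟩)⟩

lemma adj_gad {G : SimpleGraph V} {sp : V → Sym2 V × Sym2 V} {e : Sym2 V} {v : V} {i : ℕ}
    (he : e ∈ G.edgeSet) (hv : v ∈ e) (hi : i + 2 < {w | G.Adj v w}.ncard) :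
    (Gprime G sp).Adj (Sum.inl (e, some v)) (Sum.inr (v, i)) := by
  rw [Gprime, SimpleGraph.fromRel_adj]
  exact ⟨by simp, Or.inr (Or.inr (Or.inl ⟨v, i, e, rfl, rfl, he, hv, hi⟩))⟩

lemma adj_spec {G : SimpleGraph V} {sp : V → Sym2 V × Sym2 V} {v : V}
    (h : (sp v).1 ≠ (sp v).2) :
    (Gprime G sp).Adj (Sum.inl ((sp v).1, some v)) (Sum.inl ((sp v).2, some v)) := by
  rw [Gprime, SimpleGraph.fromRel_adj]
  exact ⟨by simp [h], Or.inl (Or.inr (Or.inr ⟨v, rfl, rfl⟩))⟩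

/-- an edge of a subgraph through a point -/
lemma edge_eta {W : Type*} {H : SimpleGraph W} {M : H.Subgraph} {p : Sym2 W}
    (hp : p ∈ M.edgeSet) {x : W} (hx : x ∈ p) : ∃ y, M.Adj x y ∧ p = s(x, y) := by
  induction p with
  | _ a b =>
    rw [SimpleGraph.Subgraph.mem_edgeSet] at hp
    rcases Sym2.mem_iff.mp hx with rfl | rfl
    · exact ⟨b, hp, rfl⟩
    · exact ⟨a, hp.symm, Sym2.eq_swap⟩

lemma matching_eq_of_mem {W : Type*} {H : SimpleGraph W} {M : H.Subgraph}
    (hM : M.IsMatching) {p q : Sym2 W} (hp : p ∈ M.edgeSet) (hq : q ∈ M.edgeSet)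
    {x : W} (hxp : x ∈ p) (hxq : x ∈ q) : p = q := by
  obtain ⟨y, hy, rfl⟩ := edge_eta hp hxp
  obtain ⟨y', hy', rfl⟩ := edge_eta hq hxq
  obtain ⟨w, -, hw⟩ := hM (M.edge_vert hy)
  rw [hw _ hy, hw _ hy']

lemma mem_vert_of_mem_edge {W : Type*} {H : SimpleGraph W} {M : H.Subgraph} {p : Sym2 W}
    (hp : p ∈ M.edgeSet) {x : W} (hx : x ∈ p) : x ∈ M.verts := by
  obtain ⟨y, hy, -⟩ := edge_eta hp hx
  exact M.edge_vert hy

/-- the subdivision vertex associated to a dart -/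
def dartSub (G : SimpleGraph V) : G.Dart → (Sym2 V × Option V) ⊕ (V × ℕ) :=
  fun d => Sum.inl (s(d.fst, d.snd), some d.fst)

lemma dartSub_injective (G : SimpleGraph V) : Function.Injective (dartSub G) := by
  rintro ⟨⟨a, b⟩, hab⟩ ⟨⟨c, d⟩, hcd⟩ h
  simp only [dartSub, Sum.inl.injEq, Prod.mk.injEq, Option.some.injEq] at h
  obtain ⟨h1, rfl⟩ := h
  rcases Sym2.eq_iff.mp h1 with ⟨-, rfl⟩ | ⟨rfl, rfl⟩
  · rfl
  · exact absurd rfl hab.ne'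

lemma mem_range_dartSub {G : SimpleGraph V} {e : Sym2 V} {u : V}
    (he : e ∈ G.edgeSet) (hu : u ∈ e) :
    Sum.inl (e, some u) ∈ Set.range (dartSub G) := by
  induction e with
  | _ a b =>
    rw [SimpleGraph.mem_edgeSet] at he
    rcases Sym2.mem_iff.mp hu with rfl | rfl
    · exact ⟨⟨(u, b), he⟩, rfl⟩
    · exact ⟨⟨(u, a), he.symm⟩, by simp [dartSub, Sym2.eq_swap]⟩

lemma ncard_range_dartSub [Fintype V] (G : SimpleGraph V) :
    (Set.range (dartSub G)).ncard = 2 * G.edgeSet.ncard := by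
  classical
  rw [← Set.image_univ, Set.ncard_image_of_injOn (dartSub_injective G).injOn,
    Set.ncard_univ, Nat.card_eq_fintype_card,
    SimpleGraph.dart_card_eq_twice_card_edges, Set.ncard_eq_toFinset_card',
    Set.toFinset_card]
  congr 1; convert SimpleGraph.edgeFinset_card (G := G)



lemma setOf_add_two_lt_eq (n : ℕ) : {i : ℕ | i + 2 < n} = ↑(Finset.Iio (n - 2)) := by
  ext i; simp [Finset.mem_Iio]; omega

lemma ncard_setOf_add_two_lt (n : ℕ) : {i : ℕ | i + 2 < n}.ncard = n - 2 := by
  rw [setOf_add_two_lt_eq, Set.ncard_coe_finset, Nat.card_Iio]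

lemma finite_setOf_add_two_lt (n : ℕ) : {i : ℕ | i + 2 < n}.Finite := by
  rw [setOf_add_two_lt_eq]; exact Finset.finite_toSet _

lemma exists_uncovered [Fintype V] {G : SimpleGraph V} {sp : V → Sym2 V × Sym2 V}
    {M : (Gprime G sp).Subgraph} (hM : M.IsMatching) {D : V → V → Prop}
    (hcomp : ∀ u v, G.Adj u v →
      s(Sum.inl (s(u, v), some u), Sum.inl (s(u, v), none)) ∈ M.edgeSet → D u v)
    (v : V) (hdeg2 : 2 ≤ {w | G.Adj v w}.ncard) (hout : outDeg D v ≤ 1)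
    (hns : s(Sum.inl ((sp v).1, some v), Sum.inl ((sp v).2, some v)) ∉ M.edgeSet) :
    ∃ e, e ∈ G.edgeSet ∧ v ∈ e ∧ Sum.inl (e, some v) ∉ M.verts := by
  classical
  by_contra hcon
  push_neg at hcon
  set A1 : Set V := {w | G.Adj v w ∧
    M.Adj (Sum.inl (s(v, w), some v)) (Sum.inl (s(v, w), none))} with hA1
  set A2 : Set V := {w | G.Adj v w ∧
    ∃ i, M.Adj (Sum.inl (s(v, w), some v)) (Sum.inr (v, i))} with hA2
  have hbound : ∀ {w i}, M.Adj (Sum.inl (s(v, w), some v)) (Sum.inr (v, i)) →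
      i + 2 < {w | G.Adj v w}.ncard := by
    intro w i hadj
    rcases adj_cases (M.adj_sub hadj) with ⟨e, u, he, hu, ⟨h1, h2⟩ | ⟨h1, h2⟩⟩ |
      ⟨v', i', e, he, hv', hi', ⟨h1, h2⟩ | ⟨h1, h2⟩⟩ | ⟨v', ⟨h1, h2⟩ | ⟨h1, h2⟩⟩ <;>
      simp_all
  have hcover : {w | G.Adj v w} ⊆ A1 ∪ A2 := by
    intro w hw
    have hwadj : G.Adj v w := hw
    have hvmem : (Sum.inl (s(v, w), some v) :
        (Sym2 V × Option V) ⊕ (V × ℕ)) ∈ M.verts := by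
      exact hcon s(v, w) (G.mem_edgeSet.mpr hwadj) (Sym2.mem_mk_left v w)
    obtain ⟨y, hy, -⟩ := hM hvmem
    rcases adj_cases (M.adj_sub hy) with ⟨e, u, he, hu, ⟨h1, h2⟩ | ⟨h1, h2⟩⟩ |
      ⟨v', i', e, he, hv', hi', ⟨h1, h2⟩ | ⟨h1, h2⟩⟩ | ⟨v', ⟨h1, h2⟩ | ⟨h1, h2⟩⟩
    · -- connecting edge
      left
      simp only [Sum.inl.injEq, Prod.mk.injEq, Option.some.injEq] at h1
      obtain ⟨rfl, rfl⟩ := h1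
      exact ⟨hwadj, h2 ▸ hy⟩
    · exact absurd h2 (by simp)
    · exact absurd h1 (by simp)
    · -- gadget edge
      right
      simp only [Sum.inl.injEq, Prod.mk.injEq, Option.some.injEq] at h2
      obtain ⟨rfl, rfl⟩ := h2
      exact ⟨hwadj, i', h1 ▸ hy⟩
    · -- special edge, forward
      simp only [Sum.inl.injEq, Prod.mk.injEq, Option.some.injEq] at h1
      obtain ⟨h1e, rfl⟩ := h1
      exact absurd ((SimpleGraph.Subgraph.mem_edgeSet).mpr (h1e ▸ h2 ▸ hy)) hns
    · -- special edge, backward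
      simp only [Sum.inl.injEq, Prod.mk.injEq, Option.some.injEq] at h2
      obtain ⟨h2e, rfl⟩ := h2
      have : s(Sum.inl (((sp v).2 : Sym2 V), (some v : Option V)),
          (Sum.inl ((sp v).1, some v) : (Sym2 V × Option V) ⊕ (V × ℕ))) ∈ M.edgeSet :=
        (SimpleGraph.Subgraph.mem_edgeSet).mpr (h2e ▸ h1 ▸ hy)
      rw [Sym2.eq_swap] at this
      exact absurd this hns
  -- now count
  have hA1sub : A1 ⊆ {w | D v w} := by
    rintro w ⟨hw, hadj⟩
    exact hcomp v w hw ((SimpleGraph.Subgraph.mem_edgeSet).mpr hadj)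
  have hA1card : A1.ncard ≤ 1 :=
    le_trans (Set.ncard_le_ncard hA1sub (Set.toFinite _)) hout
  have hchoice : ∀ w : V, ∃ i : ℕ, w ∈ A2 →
      M.Adj (Sum.inl (s(v, w), some v)) (Sum.inr (v, i)) := by
    intro w
    by_cases hw : w ∈ A2
    · obtain ⟨-, i, hi⟩ := hw
      exact ⟨i, fun _ => hi⟩
    · exact ⟨0, fun h => absurd h hw⟩
  choose f hf using hchoice
  have hA2inj : Set.InjOn f A2 := by
    intro w hw w' hw' hff
    have h1 := (SimpleGraph.Subgraph.mem_edgeSet).mpr (hf w hw)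
    have h2 := (SimpleGraph.Subgraph.mem_edgeSet).mpr (hf w' hw')
    rw [hff] at h1
    have := matching_eq_of_mem hM h1 h2 (Sym2.mem_mk_right _ _) (Sym2.mem_mk_right _ _)
    rcases Sym2.eq_iff.mp this with ⟨h3, -⟩ | ⟨h3, -⟩
    · simp only [Sum.inl.injEq, Prod.mk.injEq, Option.some.injEq] at h3
      exact Sym2.congr_right.mp h3.1
    · simp at h3
  have hA2maps : f '' A2 ⊆ {i : ℕ | i + 2 < {w | G.Adj v w}.ncard} := by
    rintro i ⟨w, hw, rfl⟩
    exact hbound (hf w hw)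
  have hA2card : A2.ncard ≤ {w | G.Adj v w}.ncard - 2 := by
    rw [← Set.ncard_image_of_injOn hA2inj, ← ncard_setOf_add_two_lt]
    exact Set.ncard_le_ncard hA2maps (finite_setOf_add_two_lt _)
  have hcard : {w | G.Adj v w}.ncard ≤ A1.ncard + A2.ncard :=
    le_trans (Set.ncard_le_ncard hcover (Set.toFinite _)) (Set.ncard_union_le _ _)
  omega

lemma phi_exists {G : SimpleGraph V} {sp : V → Sym2 V × Sym2 V}
    (hsp : ∀ v, (sp v).1 ∈ G.edgeSet ∧ (sp v).2 ∈ G.edgeSet ∧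
      v ∈ (sp v).1 ∧ v ∈ (sp v).2 ∧ (sp v).1 ≠ (sp v).2)
    {M : (Gprime G sp).Subgraph} {p : Sym2 ((Sym2 V × Option V) ⊕ (V × ℕ))}
    (hp : p ∈ M.edgeSet) :
    ∃ w, w ∈ p ∧ w ∈ Set.range (dartSub G) ∧
      ∀ v, p = s(Sum.inl ((sp v).1, some v), Sum.inl ((sp v).2, some v)) →
        w = Sum.inl ((sp v).1, some v) := by
  induction p with
  | _ x y =>
    rw [SimpleGraph.Subgraph.mem_edgeSet] at hp
    have hxy := M.adj_sub hp
    have hspec : ∀ (z : (Sym2 V × Option V) ⊕ (V × ℕ)) (e : Sym2 V) (v : V),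
        z = Sum.inl (e, none) ∨ (∃ q : V × ℕ, z = Sum.inr q) →
        z ∉ s(Sum.inl (((sp v).1 : Sym2 V), (some v : Option V)),
          (Sum.inl ((sp v).2, some v) : (Sym2 V × Option V) ⊕ (V × ℕ))) := by
      rintro z e v (rfl | ⟨q, rfl⟩) hz <;> rcases Sym2.mem_iff.mp hz with h | h <;> simp_all
    rcases adj_cases hxy with ⟨e, u, he, hu, ⟨h1, h2⟩ | ⟨h1, h2⟩⟩ |
      ⟨v', i', e, he, hv', hi', ⟨h1, h2⟩ | ⟨h1, h2⟩⟩ | ⟨v₀, ⟨h1, h2⟩ | ⟨h1, h2⟩⟩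
    · refine ⟨x, Sym2.mem_mk_left _ _, h1 ▸ mem_range_dartSub he hu, fun v hv => ?_⟩
      exact absurd (hv ▸ Sym2.mem_mk_right x y)
        (hspec y e v (Or.inl h2))
    · refine ⟨y, Sym2.mem_mk_right _ _, h1 ▸ mem_range_dartSub he hu, fun v hv => ?_⟩
      exact absurd (hv ▸ Sym2.mem_mk_left x y)
        (hspec x e v (Or.inl h2))
    · refine ⟨y, Sym2.mem_mk_right _ _, h2 ▸ mem_range_dartSub he hv', fun v hv => ?_⟩
      exact absurd (hv ▸ Sym2.mem_mk_left x y)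
        (hspec x e v (Or.inr ⟨_, h1⟩))
    · refine ⟨x, Sym2.mem_mk_left _ _, h2 ▸ mem_range_dartSub he hv', fun v hv => ?_⟩
      exact absurd (hv ▸ Sym2.mem_mk_right x y)
        (hspec y e v (Or.inr ⟨_, h1⟩))
    · refine ⟨x, Sym2.mem_mk_left _ _,
        h1 ▸ mem_range_dartSub (hsp v₀).1 (hsp v₀).2.2.1, fun v hv => ?_⟩
      have hx : x ∈ s(Sum.inl (((sp v).1 : Sym2 V), (some v : Option V)),
          (Sum.inl ((sp v).2, some v) : (Sym2 V × Option V) ⊕ (V × ℕ))) :=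
        hv ▸ Sym2.mem_mk_left x y
      rcases Sym2.mem_iff.mp hx with h | h
      · exact h
      · rw [h1] at h
        simp only [Sum.inl.injEq, Prod.mk.injEq, Option.some.injEq] at h
        obtain ⟨h3, h4⟩ := h
        subst h4
        exact absurd h3 (hsp v₀).2.2.2.2
    · refine ⟨y, Sym2.mem_mk_right _ _,
        h1 ▸ mem_range_dartSub (hsp v₀).1 (hsp v₀).2.2.1, fun v hv => ?_⟩
      have hy : y ∈ s(Sum.inl (((sp v).1 : Sym2 V), (some v : Option V)),
          (Sum.inl ((sp v).2, some v) : (Sym2 V × Option V) ⊕ (V × ℕ))) :=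
        hv ▸ Sym2.mem_mk_right x y
      rcases Sym2.mem_iff.mp hy with h | h
      · exact h
      · rw [h1] at h
        simp only [Sum.inl.injEq, Prod.mk.injEq, Option.some.injEq] at h
        obtain ⟨h3, h4⟩ := h
        subst h4
        exact absurd h3 (hsp v₀).2.2.2.2

lemma matching_finite_card_le [Fintype V] {G : SimpleGraph V} {sp : V → Sym2 V × Sym2 V}
    (hsp : ∀ v, (sp v).1 ∈ G.edgeSet ∧ (sp v).2 ∈ G.edgeSet ∧
      v ∈ (sp v).1 ∧ v ∈ (sp v).2 ∧ (sp v).1 ≠ (sp v).2)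
    {M : (Gprime G sp).Subgraph} (hM : M.IsMatching) :
    M.edgeSet.Finite ∧ M.edgeSet.ncard ≤ 2 * G.edgeSet.ncard := by
  classical
  haveI : Finite G.Dart := Finite.of_injective _ SimpleGraph.Dart.toProd_injective
  rcases Set.eq_empty_or_nonempty M.edgeSet with hemp | ⟨p₀, hp₀⟩
  · simp [hemp]
  obtain ⟨w₀, -, -, -⟩ := phi_exists hsp hp₀
  haveI : Nonempty ((Sym2 V × Option V) ⊕ (V × ℕ)) := ⟨w₀⟩
  have h : ∀ p : Sym2 ((Sym2 V × Option V) ⊕ (V × ℕ)), ∃ w, p ∈ M.edgeSet →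
      w ∈ p ∧ w ∈ Set.range (dartSub G) := by
    intro p
    by_cases hp : p ∈ M.edgeSet
    · obtain ⟨w, h1, h2, -⟩ := phi_exists hsp hp
      exact ⟨w, fun _ => ⟨h1, h2⟩⟩
    · exact ⟨Classical.arbitrary _, fun hc => absurd hc hp⟩
  choose φ hφ using h
  have hinj : Set.InjOn φ M.edgeSet := by
    intro p hp q hq hpq
    exact matching_eq_of_mem hM hp hq ((hφ p hp).1) (hpq ▸ (hφ q hq).1)
  have himg : φ '' M.edgeSet ⊆ Set.range (dartSub G) := by
    rintro w ⟨p, hp, rfl⟩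
    exact (hφ p hp).2
  have hfin : M.edgeSet.Finite :=
    Set.Finite.of_finite_image (Set.Finite.subset (Set.finite_range _) himg) hinj
  refine ⟨hfin, ?_⟩
  rw [← Set.ncard_image_of_injOn hinj, ← ncard_range_dartSub G]
  exact Set.ncard_le_ncard himg (Set.finite_range _)

lemma lemA [Fintype V] {G : SimpleGraph V} {sp : V → Sym2 V × Sym2 V}
    (hdeg : ∀ v, 2 ≤ {w | G.Adj v w}.ncard)
    (hsp : ∀ v, (sp v).1 ∈ G.edgeSet ∧ (sp v).2 ∈ G.edgeSet ∧
      v ∈ (sp v).1 ∧ v ∈ (sp v).2 ∧ (sp v).1 ≠ (sp v).2)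
    {M : (Gprime G sp).Subgraph} (hM : M.IsMatching) {D : V → V → Prop}
    (hD : IsOrientation G D)
    (hcomp : ∀ u v, G.Adj u v →
      s(Sum.inl (s(u, v), some u), Sum.inl (s(u, v), none)) ∈ M.edgeSet → D u v) :
    {v | outDeg D v ≤ 1}.ncard + M.edgeSet.ncard ≤ 2 * G.edgeSet.ncard := by
  classical
  haveI : Finite G.Dart := Finite.of_injective _ SimpleGraph.Dart.toProd_injective
  rcases isEmpty_or_nonempty V with hV | hV
  · have h1 : {v | outDeg D v ≤ 1} = ∅ := Set.eq_empty_of_isEmpty _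
    have h2 : M.edgeSet = ∅ := by
      ext p
      simp only [Set.mem_empty_iff_false, iff_false]
      intro hp
      induction p with
      | _ x y =>
        rcases x with ⟨e, -⟩ | ⟨v, -⟩
        · induction e with
          | _ a b => exact (IsEmpty.false a).elim
        · exact (IsEmpty.false v).elim
    simp [h1, h2]
  haveI : Nonempty ((Sym2 V × Option V) ⊕ (V × ℕ)) :=
    ⟨Sum.inr (Classical.arbitrary V, 0)⟩
  -- the designated endpoint map on matching edges
  have h : ∀ p : Sym2 ((Sym2 V × Option V) ⊕ (V × ℕ)), ∃ w, p ∈ M.edgeSet →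
      w ∈ p ∧ w ∈ Set.range (dartSub G) ∧
      ∀ v, p = s(Sum.inl ((sp v).1, some v), Sum.inl ((sp v).2, some v)) →
        w = Sum.inl ((sp v).1, some v) := by
    intro p
    by_cases hp : p ∈ M.edgeSet
    · obtain ⟨w, h1, h2, h3⟩ := phi_exists hsp hp
      exact ⟨w, fun _ => ⟨h1, h2, h3⟩⟩
    · exact ⟨Classical.arbitrary _, fun hc => absurd hc hp⟩
  choose φ hφ using h
  -- the map on light vertices
  have hpsi : ∀ v : V, ∃ w, outDeg D v ≤ 1 →
      ((s(Sum.inl ((sp v).1, some v), Sum.inl ((sp v).2, some v)) ∈ M.edgeSet ∧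
          w = Sum.inl ((sp v).2, some v)) ∨
        (w ∉ M.verts ∧
          s(Sum.inl ((sp v).1, some v), Sum.inl ((sp v).2, some v)) ∉ M.edgeSet)) ∧
      w ∈ Set.range (dartSub G) ∧ ∃ f, w = Sum.inl (f, some v) := by
    intro v
    by_cases hl : outDeg D v ≤ 1
    · by_cases hs : s(Sum.inl ((sp v).1, some v), Sum.inl ((sp v).2, some v)) ∈ M.edgeSet
      · exact ⟨Sum.inl ((sp v).2, some v), fun _ => ⟨Or.inl ⟨hs, rfl⟩,
          mem_range_dartSub (hsp v).2.1 (hsp v).2.2.2.1, _, rfl⟩⟩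
      · obtain ⟨e, he, hv, hunc⟩ := exists_uncovered hM hcomp v (hdeg v) hl hs
        exact ⟨Sum.inl (e, some v), fun _ => ⟨Or.inr ⟨hunc, hs⟩,
          mem_range_dartSub he hv, _, rfl⟩⟩
    · exact ⟨Classical.arbitrary _, fun hc => absurd hc hl⟩
  choose ψ hψ using hpsi
  set L : Set V := {v | outDeg D v ≤ 1} with hL
  have hψinj : Set.InjOn ψ L := by
    intro v hv v' hv' hvv
    obtain ⟨f, hf⟩ := (hψ v hv).2.2
    obtain ⟨f', hf'⟩ := (hψ v' hv').2.2
    rw [hvv, hf'] at hf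
    obtain ⟨-, h⟩ : f' = f ∧ v' = v := by simpa using hf
    exact h.symm
  have hφinj : Set.InjOn φ M.edgeSet := by
    intro p hp q hq hpq
    exact matching_eq_of_mem hM hp hq ((hφ p hp).1) (hpq ▸ (hφ q hq).1)
  have hdisj : Disjoint (ψ '' L) (φ '' M.edgeSet) := by
    rw [Set.disjoint_left]
    rintro w ⟨v, hv, rfl⟩ ⟨p, hp, hpw⟩
    rcases (hψ v hv).1 with ⟨hs, hw⟩ | ⟨hunc, hs⟩
    · have hwp : ψ v ∈ p := hpw ▸ (hφ p hp).1
      have hwspec : ψ v ∈ s(Sum.inl (((sp v).1 : Sym2 V), (some v : Option V)),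
          (Sum.inl ((sp v).2, some v) : (Sym2 V × Option V) ⊕ (V × ℕ))) := by
        rw [hw]; exact Sym2.mem_mk_right _ _
      have hpeq : p = s(Sum.inl ((sp v).1, some v), Sum.inl ((sp v).2, some v)) :=
        matching_eq_of_mem hM hp hs hwp hwspec
      have := (hφ p hp).2.2 v hpeq
      rw [hpw, hw] at this
      simp only [Sum.inl.injEq, Prod.mk.injEq, Option.some.injEq] at this
      exact (hsp v).2.2.2.2 this.1.symm
    · exact hunc (hpw ▸ mem_vert_of_mem_edge hp (hφ p hp).1)
  have hLfin : L.Finite := Set.toFinite _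
  have hψimg : ψ '' L ⊆ Set.range (dartSub G) := by
    rintro w ⟨v, hv, rfl⟩; exact (hψ v hv).2.1
  have hφimg : φ '' M.edgeSet ⊆ Set.range (dartSub G) := by
    rintro w ⟨p, hp, rfl⟩; exact (hφ p hp).2.1
  calc L.ncard + M.edgeSet.ncard
      = (ψ '' L).ncard + (φ '' M.edgeSet).ncard := by
        rw [Set.ncard_image_of_injOn hψinj, Set.ncard_image_of_injOn hφinj]
    _ = ((ψ '' L) ∪ (φ '' M.edgeSet)).ncard := by
        rw [Set.ncard_union_eq hdisj (hLfin.image _)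
          (Set.Finite.subset (Set.finite_range _) hφimg)]
    _ ≤ (Set.range (dartSub G)).ncard :=
        Set.ncard_le_ncard (Set.union_subset hψimg hφimg) (Set.finite_range _)
    _ = 2 * G.edgeSet.ncard := ncard_range_dartSub G

lemma orient_asymm {G : SimpleGraph V} {D : V → V → Prop} (hD : IsOrientation G D)
    {a b : V} (h : D a b) : ¬ D b a :=
  (hD.2 a b (hD.1 a b h)).mp h

lemma orient_total {G : SimpleGraph V} {D : V → V → Prop} (hD : IsOrientation G D)
    {a b : V} (h : G.Adj a b) : D a b ∨ D b a := by
  by_cases h1 : D a b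
  · exact Or.inl h1
  · exact Or.inr (by
      have := hD.2 b a h.symm
      tauto)

lemma orient_ne {G : SimpleGraph V} {D : V → V → Prop} (hD : IsOrientation G D)
    {a b : V} (h : D a b) : a ≠ b :=
  (hD.1 a b h).ne

lemma orient_split [Fintype V] {G : SimpleGraph V} {D : V → V → Prop}
    (hD : IsOrientation G D) (v : V) :
    {w | G.Adj v w}.ncard = outDeg D v + {w | D w v}.ncard := by
  have heq : {w | G.Adj v w} = {w | D v w} ∪ {w | D w v} := by
    ext w
    simp only [Set.mem_setOf_eq, Set.mem_union]
    constructor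
    · intro h
      rcases orient_total hD h with h1 | h1
      · exact Or.inl h1
      · exact Or.inr h1
    · rintro (h | h)
      · exact hD.1 v w h
      · exact (hD.1 w v h).symm
  rw [heq, outDeg, Set.ncard_union_eq ?_ (Set.toFinite _) (Set.toFinite _)]
  rw [Set.disjoint_left]
  intro w h1 h2
  exact orient_asymm hD h1 h2

lemma ncard_univ_dart [Fintype V] (G : SimpleGraph V) :
    (Set.univ : Set G.Dart).ncard = 2 * G.edgeSet.ncard := by
  classical
  rw [Set.ncard_univ, Nat.card_eq_fintype_card,
    SimpleGraph.dart_card_eq_twice_card_edges, Set.ncard_eq_toFinset_card',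
    Set.toFinset_card]
  congr 1; convert SimpleGraph.edgeFinset_card (G := G)

def InE (D : V → V → Prop) (v : V) : Set (Sym2 V) := (fun w => s(w, v)) '' {w | D w v}

open Classical in
noncomputable def sPred (sp : V → Sym2 V × Sym2 V) (D : V → V → Prop) (v : V) : Prop :=
  outDeg D v ≤ 1 ∧ (sp v).1 ∈ InE D v ∧ (sp v).2 ∈ InE D v

open Classical in
noncomputable def Cand (sp : V → Sym2 V × Sym2 V) (D : V → V → Prop) (v : V) :
    Set (Sym2 V) :=
  if sPred sp D v then InE D v \ {(sp v).1, (sp v).2} else InE D v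

lemma mem_InE {D : V → V → Prop} {v : V} {e : Sym2 V} :
    e ∈ InE D v ↔ ∃ w, D w v ∧ e = s(w, v) := by
  simp only [InE, Set.mem_image, Set.mem_setOf_eq]
  constructor
  · rintro ⟨w, h1, rfl⟩; exact ⟨w, h1, rfl⟩
  · rintro ⟨w, h1, rfl⟩; exact ⟨w, h1, rfl⟩

lemma InE_edge {G : SimpleGraph V} {D : V → V → Prop} (hD : IsOrientation G D)
    {v : V} {e : Sym2 V} (he : e ∈ InE D v) : e ∈ G.edgeSet ∧ v ∈ e := by
  obtain ⟨w, h1, rfl⟩ := mem_InE.mp he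
  exact ⟨G.mem_edgeSet.mpr (hD.1 w v h1), Sym2.mem_mk_right _ _⟩

lemma InE_ncard {D : V → V → Prop} {v : V} :
    (InE D v).ncard = {w | D w v}.ncard := by
  apply Set.ncard_image_of_injOn
  intro w _ w' _ h
  exact Sym2.congr_left.mp h

lemma InE_finite [Fintype V] {D : V → V → Prop} {v : V} : (InE D v).Finite :=
  (Set.toFinite _).image _

lemma notin_InE_of_out {G : SimpleGraph V} {D : V → V → Prop} (hD : IsOrientation G D)
    {v w : V} (h : D v w) : s(v, w) ∉ InE D v := by
  intro hc
  obtain ⟨w', h1, h2⟩ := mem_InE.mp hc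
  rcases Sym2.eq_iff.mp h2 with ⟨rfl, h3⟩ | ⟨-, rfl⟩
  · exact orient_ne hD h h3.symm
  · exact orient_asymm hD h h1

lemma Cand_subset {sp : V → Sym2 V × Sym2 V} {D : V → V → Prop} {v : V} :
    Cand sp D v ⊆ InE D v := by
  rw [Cand]
  split
  · exact Set.diff_subset
  · exact subset_rfl

lemma exists_Tsel [Fintype V] (G : SimpleGraph V) (sp : V → Sym2 V × Sym2 V)
    (D : V → V → Prop) (v : V) :
    ∃ (T : Set (Sym2 V)) (ι : Sym2 V → ℕ),
      T ⊆ Cand sp D v ∧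
      T.ncard = min (Cand sp D v).ncard ({w | G.Adj v w}.ncard - 2) ∧
      Set.InjOn ι T ∧ ∀ e ∈ T, ι e + 2 < {w | G.Adj v w}.ncard := by
  classical
  obtain ⟨T, hT1, hT2⟩ := Set.exists_subset_card_eq
    (min_le_left (Cand sp D v).ncard ({w | G.Adj v w}.ncard - 2))
  have hTfin : T.Finite := (InE_finite.subset Cand_subset).subset hT1
  have htfin : {i : ℕ | i + 2 < {w | G.Adj v w}.ncard}.Finite := finite_setOf_add_two_lt _
  have hle : T.encard ≤ {i : ℕ | i + 2 < {w | G.Adj v w}.ncard}.encard := by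
    rw [← hTfin.cast_ncard_eq, ← htfin.cast_ncard_eq, ncard_setOf_add_two_lt]
    exact_mod_cast hT2 ▸ min_le_right _ _
  obtain ⟨ι, hι1, hι2⟩ := Set.Finite.exists_injOn_of_encard_le hTfin hle
  exact ⟨T, ι, hT1, hT2, hι2, fun e he => hι1 he⟩

def R0 (sp : V → Sym2 V × Sym2 V) (D : V → V → Prop)
    (Tset : V → Set (Sym2 V)) (ι : V → Sym2 V → ℕ)
    (x y : (Sym2 V × Option V) ⊕ (V × ℕ)) : Prop :=
  (∃ u w', D u w' ∧ x = Sum.inl (s(u, w'), some u) ∧ y = Sum.inl (s(u, w'), none)) ∨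
  (∃ v, sPred sp D v ∧ x = Sum.inl ((sp v).1, some v) ∧
    y = Sum.inl ((sp v).2, some v)) ∨
  (∃ v e, e ∈ Tset v ∧ x = Sum.inl (e, some v) ∧ y = Sum.inr (v, ι v e))

def Rr (sp : V → Sym2 V × Sym2 V) (D : V → V → Prop)
    (Tset : V → Set (Sym2 V)) (ι : V → Sym2 V → ℕ)
    (x y : (Sym2 V × Option V) ⊕ (V × ℕ)) : Prop :=
  R0 sp D Tset ι x y ∨ R0 sp D Tset ι y x

lemma Rr_some {sp : V → Sym2 V × Sym2 V} {D : V → V → Prop}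
    {Tset : V → Set (Sym2 V)} {ι : V → Sym2 V → ℕ} {e : Sym2 V} {u : V}
    {y : (Sym2 V × Option V) ⊕ (V × ℕ)}
    (h : Rr sp D Tset ι (Sum.inl (e, some u)) y) :
    (∃ w', D u w' ∧ e = s(u, w') ∧ y = Sum.inl (e, none)) ∨
    (sPred sp D u ∧ e = (sp u).1 ∧ y = Sum.inl ((sp u).2, some u)) ∨
    (sPred sp D u ∧ e = (sp u).2 ∧ y = Sum.inl ((sp u).1, some u)) ∨
    (e ∈ Tset u ∧ y = Sum.inr (u, ι u e)) := by
  rcases h with (⟨u', w', hd, hx, hy⟩ | ⟨v, hs, hx, hy⟩ | ⟨v, e', he', hx, hy⟩) |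
    (⟨u', w', hd, hy, hx⟩ | ⟨v, hs, hy, hx⟩ | ⟨v, e', he', hy, hx⟩)
  · simp only [Sum.inl.injEq, Prod.mk.injEq, Option.some.injEq] at hx
    obtain ⟨h1, h2⟩ := hx
    subst h2
    exact Or.inl ⟨w', hd, h1, by rw [hy, ← h1]⟩
  · simp only [Sum.inl.injEq, Prod.mk.injEq, Option.some.injEq] at hx
    obtain ⟨h1, h2⟩ := hx
    subst h2
    exact Or.inr (Or.inl ⟨hs, h1, hy⟩)
  · simp only [Sum.inl.injEq, Prod.mk.injEq, Option.some.injEq] at hx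
    obtain ⟨h1, h2⟩ := hx
    subst h2
    subst h1
    exact Or.inr (Or.inr (Or.inr ⟨he', hy⟩))
  · simp at hx
  · simp only [Sum.inl.injEq, Prod.mk.injEq, Option.some.injEq] at hx
    obtain ⟨h1, h2⟩ := hx
    subst h2
    exact Or.inr (Or.inr (Or.inl ⟨hs, h1, hy⟩))
  · simp at hx

lemma Rr_none {sp : V → Sym2 V × Sym2 V} {D : V → V → Prop}
    {Tset : V → Set (Sym2 V)} {ι : V → Sym2 V → ℕ} {e : Sym2 V}
    {y : (Sym2 V × Option V) ⊕ (V × ℕ)}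
    (h : Rr sp D Tset ι (Sum.inl (e, none)) y) :
    ∃ u w', D u w' ∧ e = s(u, w') ∧ y = Sum.inl (e, some u) := by
  rcases h with (⟨u', w', hd, hx, hy⟩ | ⟨v, hs, hx, hy⟩ | ⟨v, e', he', hx, hy⟩) |
    (⟨u', w', hd, hy, hx⟩ | ⟨v, hs, hy, hx⟩ | ⟨v, e', he', hy, hx⟩)
  · simp at hx
  · simp at hx
  · simp at hx
  · simp only [Sum.inl.injEq, Prod.mk.injEq] at hx
    obtain ⟨h1, -⟩ := hx
    exact ⟨u', w', hd, h1, by rw [hy, ← h1]⟩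
  · simp at hx
  · simp at hx

lemma Rr_inr {sp : V → Sym2 V × Sym2 V} {D : V → V → Prop}
    {Tset : V → Set (Sym2 V)} {ι : V → Sym2 V → ℕ} {v : V} {i : ℕ}
    {y : (Sym2 V × Option V) ⊕ (V × ℕ)}
    (h : Rr sp D Tset ι (Sum.inr (v, i)) y) :
    ∃ e, e ∈ Tset v ∧ i = ι v e ∧ y = Sum.inl (e, some v) := by
  rcases h with (⟨u', w', hd, hx, hy⟩ | ⟨v', hs, hx, hy⟩ | ⟨v', e', he', hx, hy⟩) |
    (⟨u', w', hd, hy, hx⟩ | ⟨v', hs, hy, hx⟩ | ⟨v', e', he', hy, hx⟩)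
  · simp at hx
  · simp at hx
  · simp at hx
  · simp at hx
  · simp at hx
  · simp only [Sum.inr.injEq, Prod.mk.injEq] at hx
    obtain ⟨h1, h2⟩ := hx
    subst h1
    exact ⟨e', he', h2, hy⟩

lemma Rr_uniq {G : SimpleGraph V} {sp : V → Sym2 V × Sym2 V} {D : V → V → Prop}
    {Tset : V → Set (Sym2 V)} {ι : V → Sym2 V → ℕ}
    (hD : IsOrientation G D)
    (hsp : ∀ v, (sp v).1 ∈ G.edgeSet ∧ (sp v).2 ∈ G.edgeSet ∧
      v ∈ (sp v).1 ∧ v ∈ (sp v).2 ∧ (sp v).1 ≠ (sp v).2)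
    (hTsub : ∀ v, Tset v ⊆ InE D v)
    (hTnotsp : ∀ v, sPred sp D v → (sp v).1 ∉ Tset v ∧ (sp v).2 ∉ Tset v)
    (hι : ∀ v, Set.InjOn (ι v) (Tset v))
    {x y y' : (Sym2 V × Option V) ⊕ (V × ℕ)}
    (h : Rr sp D Tset ι x y) (h' : Rr sp D Tset ι x y') : y = y' := by
  rcases x with ⟨e, o | u⟩ | ⟨v, i⟩
  · obtain ⟨u, w', hd, he, hy⟩ := Rr_none h
    obtain ⟨u'', w'', hd'', he'', hy''⟩ := Rr_none h'
    rw [he] at he''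
    rcases Sym2.eq_iff.mp he'' with ⟨rfl, -⟩ | ⟨rfl, rfl⟩
    · rw [hy, hy'']
    · exact absurd hd (orient_asymm hD hd'')
  · have hnoio : ∀ {w'}, D u w' → e = s(u, w') → e ∉ InE D u := by
      rintro w' hd rfl
      exact notin_InE_of_out hD hd
    rcases Rr_some h with ⟨w', hd, he, hy⟩ | ⟨hs, he, hy⟩ | ⟨hs, he, hy⟩ | ⟨ht, hy⟩ <;>
      rcases Rr_some h' with ⟨w'', hd', he', hy'⟩ | ⟨hs', he', hy'⟩ | ⟨hs', he', hy'⟩ |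
        ⟨ht', hy'⟩
    · rw [hy, hy']
    · exact absurd (he' ▸ hs'.2.1) (hnoio hd he)
    · exact absurd (he' ▸ hs'.2.2) (hnoio hd he)
    · exact absurd (hTsub u ht') (hnoio hd he)
    · exact absurd (he ▸ hs.2.1) (hnoio hd' he')
    · rw [hy, hy']
    · exact absurd (he.symm.trans he') (hsp u).2.2.2.2
    · exact absurd (he ▸ ht') ((hTnotsp u hs).1)
    · exact absurd (he ▸ hs.2.2) (hnoio hd' he')
    · exact absurd (he'.symm.trans he) (hsp u).2.2.2.2
    · rw [hy, hy']
    · exact absurd (he ▸ ht') ((hTnotsp u hs).2)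
    · exact absurd (hTsub u ht) (hnoio hd' he')
    · exact absurd (he' ▸ ht) ((hTnotsp u hs').1)
    · exact absurd (he' ▸ ht) ((hTnotsp u hs').2)
    · rw [hy, hy']
  · obtain ⟨e, he, hi, hy⟩ := Rr_inr h
    obtain ⟨e', he', hi', hy'⟩ := Rr_inr h'
    have : e = e' := hι v he he' (hi ▸ hi')
    rw [hy, hy', this]

lemma Rr_adj {G : SimpleGraph V} {sp : V → Sym2 V × Sym2 V} {D : V → V → Prop}
    {Tset : V → Set (Sym2 V)} {ι : V → Sym2 V → ℕ}
    (hD : IsOrientation G D)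
    (hsp : ∀ v, (sp v).1 ∈ G.edgeSet ∧ (sp v).2 ∈ G.edgeSet ∧
      v ∈ (sp v).1 ∧ v ∈ (sp v).2 ∧ (sp v).1 ≠ (sp v).2)
    (hTsub : ∀ v, Tset v ⊆ InE D v)
    (hT4 : ∀ v, ∀ e ∈ Tset v, ι v e + 2 < {w | G.Adj v w}.ncard)
    {x y : (Sym2 V × Option V) ⊕ (V × ℕ)}
    (h : Rr sp D Tset ι x y) : (Gprime G sp).Adj x y := by
  have h0 : ∀ {a b}, R0 sp D Tset ι a b → (Gprime G sp).Adj a b := by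
    rintro a b (⟨u, w', hd, rfl, rfl⟩ | ⟨v, hs, rfl, rfl⟩ | ⟨v, e, he, rfl, rfl⟩)
    · exact adj_conn (G.mem_edgeSet.mpr (hD.1 u w' hd)) (Sym2.mem_mk_left _ _)
    · exact adj_spec (hsp v).2.2.2.2
    · obtain ⟨h1, h2⟩ := InE_edge hD (hTsub v he)
      exact adj_gad h1 h2 (hT4 v e he)
  rcases h with h | h
  · exact h0 h
  · exact (h0 h).symm

lemma lemB [Fintype V] {G : SimpleGraph V} {sp : V → Sym2 V × Sym2 V}
    (hdeg : ∀ v, 2 ≤ {w | G.Adj v w}.ncard)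
    (hsp : ∀ v, (sp v).1 ∈ G.edgeSet ∧ (sp v).2 ∈ G.edgeSet ∧
      v ∈ (sp v).1 ∧ v ∈ (sp v).2 ∧ (sp v).1 ≠ (sp v).2)
    {D : V → V → Prop} (hD : IsOrientation G D) :
    ∃ M : (Gprime G sp).Subgraph, M.IsMatching ∧
      2 * G.edgeSet.ncard ≤ M.edgeSet.ncard + {v | outDeg D v ≤ 1}.ncard := by
  classical
  haveI : Finite G.Dart := Finite.of_injective _ SimpleGraph.Dart.toProd_injective
  choose Tset ι hT1 hT2 hT3 hT4 using exists_Tsel G sp D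
  have hTsub : ∀ v, Tset v ⊆ InE D v := fun v => (hT1 v).trans Cand_subset
  have hTnotsp : ∀ v, sPred sp D v → (sp v).1 ∉ Tset v ∧ (sp v).2 ∉ Tset v := by
    intro v hs
    have h1 := hT1 v
    rw [Cand, if_pos hs] at h1
    exact ⟨fun hc => (h1 hc).2 (by simp), fun hc => (h1 hc).2 (by simp)⟩
  set M : (Gprime G sp).Subgraph :=
    { verts := {x | ∃ y, Rr sp D Tset ι x y},
      Adj := Rr sp D Tset ι,
      adj_sub := fun h => Rr_adj hD hsp hTsub hT4 h,
      edge_vert := fun h => ⟨_, h⟩,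
      symm := ⟨fun x y h => Or.symm h⟩ } with hMdef
  have hmatch : M.IsMatching := by
    rintro x ⟨y, hy⟩
    exact ⟨y, hy, fun y' hy' => Rr_uniq hD hsp hTsub hTnotsp hT3 hy' hy⟩
  refine ⟨M, hmatch, ?_⟩
  -- the dart-counting argument
  set bad : Set G.Dart := {d | ¬ D d.fst d.snd ∧ s(d.fst, d.snd) ∉ Tset d.fst ∧
    ¬(sPred sp D d.fst ∧ s(d.fst, d.snd) = (sp d.fst).1)} with hbaddef
  set Θ : G.Dart → Sym2 ((Sym2 V × Option V) ⊕ (V × ℕ)) := fun d =>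
    if D d.fst d.snd then
      s(Sum.inl (s(d.fst, d.snd), some d.fst), Sum.inl (s(d.fst, d.snd), none))
    else if s(d.fst, d.snd) ∈ Tset d.fst then
      s(Sum.inl (s(d.fst, d.snd), some d.fst), Sum.inr (d.fst, ι d.fst s(d.fst, d.snd)))
    else s(Sum.inl ((sp d.fst).1, some d.fst), Sum.inl ((sp d.fst).2, some d.fst))
    with hΘdef
  have hspec_of : ∀ d : G.Dart, d ∉ bad → ¬ D d.fst d.snd →
      s(d.fst, d.snd) ∉ Tset d.fst →
      sPred sp D d.fst ∧ s(d.fst, d.snd) = (sp d.fst).1 := by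
    intro d hd h1 h2
    by_contra hc
    exact hd ⟨h1, h2, hc⟩
  have hmem : ∀ d : G.Dart, d ∉ bad → Θ d ∈ M.edgeSet := by
    intro d hd
    by_cases h1 : D d.fst d.snd
    · rw [hΘdef]
      simp only [if_pos h1]
      rw [SimpleGraph.Subgraph.mem_edgeSet]
      exact Or.inl (Or.inl ⟨d.fst, d.snd, h1, rfl, rfl⟩)
    · by_cases h2 : s(d.fst, d.snd) ∈ Tset d.fst
      · rw [hΘdef]
        simp only [if_neg h1, if_pos h2]
        rw [SimpleGraph.Subgraph.mem_edgeSet]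
        exact Or.inl (Or.inr (Or.inr ⟨d.fst, s(d.fst, d.snd), h2, rfl, rfl⟩))
      · obtain ⟨hps, -⟩ := hspec_of d hd h1 h2
        rw [hΘdef]
        simp only [if_neg h1, if_neg h2]
        rw [SimpleGraph.Subgraph.mem_edgeSet]
        exact Or.inl (Or.inr (Or.inl ⟨d.fst, hps, rfl, rfl⟩))
  have hdart_eq : ∀ (d d' : G.Dart), d.fst = d'.fst → d.snd = d'.snd → d = d' := by
    intro d d' h1 h2
    exact SimpleGraph.Dart.ext _ _ (Prod.ext h1 h2)
  have hresolve : ∀ (d d' : G.Dart), d.fst = d'.fst →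
      (d.fst = d'.fst ∧ d.snd = d'.snd ∨ d.fst = d'.snd ∧ d.snd = d'.fst) → d = d' := by
    intro d d' hf h
    rcases h with ⟨-, h4⟩ | ⟨h3, -⟩
    · exact hdart_eq d d' hf h4
    · exact absurd (hf.symm.trans h3) (SimpleGraph.Dart.fst_ne_snd d')
  have hinj : Set.InjOn Θ {d | d ∉ bad} := by
    intro d hd d' hd' heq
    rw [hΘdef] at heq
    simp only at heq
    by_cases h1 : D d.fst d.snd <;> by_cases h1' : D d'.fst d'.snd
    · rw [if_pos h1, if_pos h1'] at heq
      simp only [Sym2.eq_iff, Sum.inl.injEq, Prod.mk.injEq, Option.some.injEq,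
        reduceCtorEq, and_false, false_and, or_false] at heq
      obtain ⟨⟨hdisj, hf⟩, -⟩ := heq
      exact hresolve d d' hf hdisj
    · rw [if_pos h1, if_neg h1'] at heq
      by_cases h2' : s(d'.fst, d'.snd) ∈ Tset d'.fst
      · rw [if_pos h2'] at heq
        simp [Sym2.eq_iff] at heq
      · rw [if_neg h2'] at heq
        simp [Sym2.eq_iff] at heq
    · rw [if_neg h1, if_pos h1'] at heq
      by_cases h2 : s(d.fst, d.snd) ∈ Tset d.fst
      · rw [if_pos h2] at heq
        simp [Sym2.eq_iff] at heq
      · rw [if_neg h2] at heq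
        simp [Sym2.eq_iff] at heq
    · rw [if_neg h1, if_neg h1'] at heq
      by_cases h2 : s(d.fst, d.snd) ∈ Tset d.fst <;>
        by_cases h2' : s(d'.fst, d'.snd) ∈ Tset d'.fst
      · rw [if_pos h2, if_pos h2'] at heq
        simp only [Sym2.eq_iff, Sum.inl.injEq, Sum.inr.injEq, Prod.mk.injEq,
          Option.some.injEq, reduceCtorEq, and_false, false_and, or_false] at heq
        obtain ⟨⟨hdisj, hf⟩, -⟩ := heq
        exact hresolve d d' hf hdisj
      · rw [if_pos h2, if_neg h2'] at heq
        simp [Sym2.eq_iff] at heq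
      · rw [if_neg h2, if_pos h2'] at heq
        simp [Sym2.eq_iff] at heq
      · rw [if_neg h2, if_neg h2'] at heq
        obtain ⟨hps, hesp⟩ := hspec_of d hd h1 h2
        obtain ⟨hps', hesp'⟩ := hspec_of d' hd' h1' h2'
        simp only [Sym2.eq_iff, Sum.inl.injEq, Prod.mk.injEq, Option.some.injEq] at heq
        have hf : d.fst = d'.fst := by tauto
        have he : s(d.fst, d.snd) = s(d'.fst, d'.snd) := by
          rw [hesp, hesp', hf]
        exact hdart_eq d d' hf (Sym2.congr_right.mp (hf ▸ he))
  -- bad darts: at most one per vertex, and only at light vertices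
  set BadE : V → Set (Sym2 V) := fun a => InE D a \ (Tset a ∪
    (if sPred sp D a then {(sp a).1} else ∅)) with hBadEdef
  have hbadedge : ∀ d ∈ bad, s(d.fst, d.snd) ∈ BadE d.fst := by
    rintro d ⟨h1, h2, h3⟩
    have hda : D d.snd d.fst := by
      rcases orient_total hD d.adj with h | h
      · exact absurd h h1
      · exact h
    refine ⟨mem_InE.mpr ⟨d.snd, hda, Sym2.eq_swap⟩, ?_⟩
    rintro (hc | hc)
    · exact h2 hc
    · rw [Set.mem_ite_empty_right] at hc
      exact h3 ⟨hc.1, hc.2⟩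
  have hkey : ∀ a : V, (BadE a).Nonempty → (BadE a).ncard ≤ 1 ∧ outDeg D a ≤ 1 := by
    intro a hne
    have hsplit := orient_split hD a
    have hin : (InE D a).ncard = {w | D w a}.ncard := InE_ncard
    have hdega := hdeg a
    have hT2a := hT2 a
    by_cases hs : sPred sp D a
    · have hpair : {(sp a).1, (sp a).2} ⊆ InE D a := by
        rintro f (rfl | rfl)
        · exact hs.2.1
        · exact hs.2.2
      have hn2 : 2 ≤ (InE D a).ncard := by
        rw [← Set.ncard_pair (hsp a).2.2.2.2]
        exact Set.ncard_le_ncard hpair InE_finite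
      have hCand : (Cand sp D a).ncard = (InE D a).ncard - 2 := by
        rw [Cand, if_pos hs, Set.ncard_diff hpair,
          Set.ncard_pair (hsp a).2.2.2.2]
      have hnle : (InE D a).ncard ≤ {w | G.Adj a w}.ncard := by omega
      have hTcard : (Tset a).ncard = (InE D a).ncard - 2 := by
        rw [hT2a, hCand, Nat.min_eq_left (by omega)]
      have hsub1 : Tset a ∪ {(sp a).1} ⊆ InE D a :=
        Set.union_subset (hTsub a) (by simp [hs.2.1])
      have hnotmem : (sp a).1 ∉ Tset a := (hTnotsp a hs).1
      have hucard : (Tset a ∪ {(sp a).1}).ncard = (InE D a).ncard - 1 := by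
        rw [Set.union_singleton, Set.ncard_insert_of_notMem hnotmem
          (InE_finite.subset (hTsub a)), hTcard]
        omega
      have hBE : (BadE a).ncard = (InE D a).ncard - ((InE D a).ncard - 1) := by
        rw [hBadEdef]
        simp only [if_pos hs]
        rw [Set.ncard_diff hsub1, hucard]
      refine ⟨by omega, hs.1⟩
    · have hCand : Cand sp D a = InE D a := by rw [Cand, if_neg hs]
      have hBEeq : BadE a = InE D a \ Tset a := by
        rw [hBadEdef]
        simp only [if_neg hs, Set.union_empty]
      have hBE : (BadE a).ncard = (InE D a).ncard - (Tset a).ncard := by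
        rw [hBEeq, Set.ncard_diff (hTsub a)]
      have hpos : 0 < (BadE a).ncard := by
        rw [hBEeq] at hne ⊢
        exact Set.ncard_pos ((InE_finite).subset Set.diff_subset) |>.mpr hne
      rw [hCand] at hT2a
      have hnne : (InE D a).ncard ≠ {w | G.Adj a w}.ncard := by
        intro hc
        apply hs
        have hout0 : outDeg D a = 0 := by omega
        have hempty : {w | D a w} = ∅ := by
          rw [← Set.ncard_eq_zero (Set.toFinite _)]
          exact hout0
        have hInE : ∀ f : Sym2 V, f ∈ G.edgeSet → a ∈ f → f ∈ InE D a := by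
          intro f hf haf
          obtain ⟨w, rfl⟩ := Sym2.mem_iff_exists.mp haf
          have hadj : G.Adj a w := G.mem_edgeSet.mp hf
          have hnd : ¬ D a w := by
            intro hc'
            have hmem' : w ∈ {w | D a w} := hc'
            rw [hempty] at hmem'
            exact hmem'
          have hdw : D w a := by
            rcases orient_total hD hadj with h | h
            · exact absurd h hnd
            · exact h
          exact mem_InE.mpr ⟨w, hdw, Sym2.eq_swap⟩
        exact ⟨by omega, hInE _ (hsp a).1 (hsp a).2.2.1,
          hInE _ (hsp a).2.1 (hsp a).2.2.2.1⟩
      have hnlt : (InE D a).ncard < {w | G.Adj a w}.ncard := by omega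
      rcases Nat.le_total (InE D a).ncard ({w | G.Adj a w}.ncard - 2) with hc | hc
      · rw [Nat.min_eq_left hc] at hT2a
        omega
      · rw [Nat.min_eq_right hc] at hT2a
        constructor <;> omega
  have hbadlight : ∀ d ∈ bad, d.fst ∈ {v | outDeg D v ≤ 1} := by
    intro d hd
    exact (hkey d.fst ⟨_, hbadedge d hd⟩).2
  have hbadinj : Set.InjOn (fun d : G.Dart => d.fst) bad := by
    intro d hd d' hd' hf
    have hf2 : d.fst = d'.fst := hf
    have h1 := hbadedge d hd
    have h2 := hbadedge d' hd'
    rw [← hf2] at h2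
    have hle := (hkey d.fst ⟨_, h1⟩).1
    have hBfin : (BadE d.fst).Finite := InE_finite.subset Set.diff_subset
    have heq2 := (Set.ncard_le_one hBfin).mp hle _ h1 _ h2
    exact hdart_eq d d' hf2 (Sym2.congr_right.mp heq2)
  -- assemble the count
  have hcover : (Set.univ : Set G.Dart) = {d | d ∉ bad} ∪ bad := by
    ext d
    simp [em']
  have hMfin : M.edgeSet.Finite := (matching_finite_card_le hsp hmatch).1
  have hgoodle : {d : G.Dart | d ∉ bad}.ncard ≤ M.edgeSet.ncard := by
    rw [← Set.ncard_image_of_injOn hinj]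
    exact Set.ncard_le_ncard (by rintro p ⟨d, hd, rfl⟩; exact hmem d hd) hMfin
  have hbadle : bad.ncard ≤ {v | outDeg D v ≤ 1}.ncard := by
    rw [← Set.ncard_image_of_injOn hbadinj]
    exact Set.ncard_le_ncard (by rintro v ⟨d, hd, rfl⟩; exact hbadlight d hd)
      (Set.toFinite _)
  have hsum : (Set.univ : Set G.Dart).ncard ≤
      {d : G.Dart | d ∉ bad}.ncard + bad.ncard := by
    rw [hcover]
    exact Set.ncard_union_le _ _
  rw [ncard_univ_dart G] at hsum
  omega

end Aux


open Aux in
theorem stmt16 {V : Type*} [Fintype V] (G : SimpleGraph V)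
    (hdeg : ∀ v, 2 ≤ {w | G.Adj v w}.ncard)
    (sp : V → Sym2 V × Sym2 V)
    (hsp : ∀ v, (sp v).1 ∈ G.edgeSet ∧ (sp v).2 ∈ G.edgeSet ∧
      v ∈ (sp v).1 ∧ v ∈ (sp v).2 ∧ (sp v).1 ≠ (sp v).2) :
    (∃ D, IsOrientation G D ∧
      {v | outDeg D v ≤ 1}.ncard = 2 * G.edgeSet.ncard -
        sSup {k | ∃ M : (Gprime G sp).Subgraph, M.IsMatching ∧
          M.edgeSet.ncard = k}) ∧
    ∀ M : (Gprime G sp).Subgraph, M.IsMatching →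
      (∀ M' : (Gprime G sp).Subgraph, M'.IsMatching →
        M'.edgeSet.ncard ≤ M.edgeSet.ncard) →
      ∀ D, IsOrientation G D →
        (∀ u v, G.Adj u v →
          s(Sum.inl (s(u, v), some u), Sum.inl (s(u, v), none)) ∈ M.edgeSet →
          D u v) →
        {v | outDeg D v ≤ 1}.ncard ≤ 2 * G.edgeSet.ncard - M.edgeSet.ncard := by
  classical
  set S : Set ℕ := {k | ∃ M : (Gprime G sp).Subgraph, M.IsMatching ∧
    M.edgeSet.ncard = k} with hSdef
  have hSne : S.Nonempty := by
    refine ⟨0, ⊥, ?_, ?_⟩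
    · intro v hv
      rw [SimpleGraph.Subgraph.verts_bot] at hv
      exact absurd hv (Set.notMem_empty v)
    · rw [SimpleGraph.Subgraph.edgeSet_bot, Set.ncard_empty]
  have hSbdd : BddAbove S := by
    refine ⟨2 * G.edgeSet.ncard, ?_⟩
    rintro k ⟨M, hM, rfl⟩
    exact (matching_finite_card_le hsp hM).2
  obtain ⟨Mmax, hMmax, hMcard⟩ := Nat.sSup_mem hSne hSbdd
  constructor
  · -- part 1 : existence of an optimal orientation
    set inM : V → V → Prop := fun u v =>
      s(Sum.inl (s(u, v), some u), Sum.inl (s(u, v), none)) ∈ Mmax.edgeSet with hinM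
    have hnotboth : ∀ u v, G.Adj u v → ¬(inM u v ∧ inM v u) := by
      rintro u v hadj ⟨h1, h2⟩
      have hswap : s(v, u) = s(u, v) := Sym2.eq_swap
      simp only [hinM] at h1 h2
      rw [hswap] at h2
      have := matching_eq_of_mem hMmax h1 h2 (Sym2.mem_mk_right _ _)
        (Sym2.mem_mk_right _ _)
      rcases Sym2.eq_iff.mp this with ⟨h3, -⟩ | ⟨-, h3⟩
      · simp only [Sum.inl.injEq, Prod.mk.injEq, Option.some.injEq] at h3
        exact hadj.ne h3.2
      · simp at h3
    set D : V → V → Prop := fun u v =>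
      G.Adj u v ∧ (inM u v ∨ (¬ inM v u ∧ WellOrderingRel u v)) with hDdef
    have hDor : IsOrientation G D := by
      refine ⟨fun u v h => h.1, fun u v hadj => ?_⟩
      have hne : u ≠ v := hadj.ne
      have htri : WellOrderingRel u v ∨ WellOrderingRel v u := by
        rcases trichotomous_of WellOrderingRel u v with h | h | h
        · exact Or.inl h
        · exact absurd h hne
        · exact Or.inr h
      have hasy : ¬(WellOrderingRel u v ∧ WellOrderingRel v u) := by
        rintro ⟨h1, h2⟩
        exact asymm h1 h2
      have hnb := hnotboth u v hadj
      have hadj' : G.Adj v u := hadj.symm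
      simp only [hDdef]
      tauto
    have hcompM : ∀ u v, G.Adj u v → inM u v → D u v := fun u v h hm =>
      ⟨h, Or.inl hm⟩
    have hA := lemA hdeg hsp hMmax hDor hcompM
    obtain ⟨M', hM', hB⟩ := lemB hdeg hsp hDor
    have hM'le : M'.edgeSet.ncard ≤ sSup S := le_csSup hSbdd ⟨M', hM', rfl⟩
    refine ⟨D, hDor, ?_⟩
    rw [hMcard] at hA
    omega
  · -- part 2
    intro M hM _ D hDo hcomp
    have hA := lemA hdeg hsp hM hDo hcomp
    omega
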